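/- For any two binary strings x, x' of length m with the same Hamming weight, and any n ≥ m and 0 ≤ c ≤ n−m, the number of y ∈ {0,1}^n containing x as a subsequence with h(y) = h(x) + c equals the number of y ∈ {0,1}^n containing x' as a subsequence with h(y) = h(x') + c. -/

import Mathlib

namespace ClusterCard

/-- The quantity we study. -/
noncomputable def F (x : List Bool) (n c : ℕ) : ℕ :=
  Nat.card {y : List Bool // y.length = n ∧ x.Sublist y ∧
      y.count true = x.count true + c}

instance finP (n : ℕ) (p : List Bool → Prop) :
    Finite {y : List Bool // y.length = n ∧ p y} := by
  have h : {y : List Bool | y.length = n ∧ p y}.Finite :=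
    (List.finite_length_eq Bool n).subset (fun y hy => hy.1)
  exact h.to_subtype

/-- Partition a set of lists of length `n+1` by the head. -/
lemma card_partition (n : ℕ) (p : List Bool → Prop) :
    Nat.card {y : List Bool // y.length = n + 1 ∧ p y} =
      Nat.card {y : List Bool // y.length = n ∧ p (true :: y)} +
      Nat.card {y : List Bool // y.length = n ∧ p (false :: y)} := by
  rw [← Nat.card_sum]
  apply Nat.card_congr
  refine
    { toFun := fun z => ?_
      invFun := fun z => Sum.elim
        (fun y => ⟨true :: y.1, by simpa using y.2⟩)
        (fun y => ⟨false :: y.1, by simpa using y.2⟩) z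
      left_inv := ?_
      right_inv := ?_ }
  · obtain ⟨y, hy⟩ := z
    match y, hy with
    | true :: t, hy => exact Sum.inl ⟨t, by simpa using hy⟩
    | false :: t, hy => exact Sum.inr ⟨t, by simpa using hy⟩
  · rintro ⟨y, hy⟩
    match y, hy with
    | true :: t, hy => rfl
    | false :: t, hy => rfl
  · rintro (⟨y, hy⟩ | ⟨y, hy⟩) <;> rfl

lemma card_count (n c : ℕ) :
    Nat.card {y : List Bool // y.length = n ∧ y.count true = c} = n.choose c := by
  induction n generalizing c with
  | zero =>
    rcases c with _ | c
    · rw [Nat.choose_zero_right]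
      rw [Nat.card_eq_one_iff_unique]
      constructor
      · constructor
        rintro ⟨y, hy⟩ ⟨z, hz⟩
        have : y = [] := List.length_eq_zero_iff.mp hy.1
        have : z = [] := List.length_eq_zero_iff.mp hz.1
        simp_all
      · exact ⟨⟨[], by simp⟩⟩
    · rw [Nat.choose_eq_zero_of_lt (by omega)]
      rw [Nat.card_eq_zero]
      left
      refine ⟨fun z => ?_⟩
      obtain ⟨y, hy⟩ := z
      have : y = [] := List.length_eq_zero_iff.mp hy.1
      simp_all
  | succ n ih =>
    rw [card_partition n (fun y => y.count true = c)]
    rcases c with _ | c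
    · have h1 : Nat.card {y : List Bool // y.length = n ∧ (true :: y).count true = 0} = 0 := by
        rw [Nat.card_eq_zero]; left
        refine ⟨fun z => ?_⟩
        obtain ⟨y, hy⟩ := z
        simp [List.count_cons] at hy
      have h2 : Nat.card {y : List Bool // y.length = n ∧ (false :: y).count true = 0} =
          Nat.card {y : List Bool // y.length = n ∧ y.count true = 0} := by
        apply Nat.card_congr
        apply Equiv.subtypeEquivRight
        intro y
        simp [List.count_cons]
      rw [h1, h2, ih]
      simp
    · have h1 : Nat.card {y : List Bool // y.length = n ∧ (true :: y).count true = c + 1} =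
          Nat.card {y : List Bool // y.length = n ∧ y.count true = c} := by
        apply Nat.card_congr
        apply Equiv.subtypeEquivRight
        intro y
        simp [List.count_cons]
      have h2 : Nat.card {y : List Bool // y.length = n ∧ (false :: y).count true = c + 1} =
          Nat.card {y : List Bool // y.length = n ∧ y.count true = c + 1} := by
        apply Nat.card_congr
        apply Equiv.subtypeEquivRight
        intro y
        simp [List.count_cons]
      rw [h1, h2, ih, ih, Nat.choose_succ_succ]

lemma F_nil (n c : ℕ) : F [] n c = n.choose c := by
  rw [F, ← card_count n c]
  apply Nat.card_congr
  apply Equiv.subtypeEquivRight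
  intro y
  simp

lemma F_zero (x : List Bool) (c : ℕ) (h : x ≠ [] ∨ c ≠ 0) : F x 0 c = 0 := by
  rw [F, Nat.card_eq_zero]
  left
  refine ⟨fun z => ?_⟩
  obtain ⟨y, hy, hs, hc⟩ := z
  have hy0 : y = [] := List.length_eq_zero_iff.mp hy
  subst hy0
  have : x = [] := List.sublist_nil.mp hs
  subst this
  simp_all

lemma F_cons_true (xs : List Bool) (n c : ℕ) :
    F (true :: xs) (n + 1) c = F xs n c + F (true :: xs) n c := by
  rw [F, card_partition n
    (fun y => (true :: xs).Sublist y ∧ y.count true = (true :: xs).count true + c)]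
  congr 1
  · apply Nat.card_congr
    apply Equiv.subtypeEquivRight
    intro y
    simp [List.cons_sublist_cons, List.count_cons]
    intro _
    omega
  · apply Nat.card_congr
    apply Equiv.subtypeEquivRight
    intro y
    rw [List.cons_sublist_cons']
    simp [List.count_cons]

lemma F_cons_false (xs : List Bool) (n c : ℕ) :
    F (false :: xs) (n + 1) c =
      F xs n c + (if c = 0 then 0 else F (false :: xs) n (c - 1)) := by
  rw [F, card_partition n
    (fun y => (false :: xs).Sublist y ∧ y.count true = (false :: xs).count true + c)]
  have hF : Nat.card {y : List Bool // y.length = n ∧ (false :: xs).Sublist (false :: y) ∧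
      (false :: y).count true = (false :: xs).count true + c} = F xs n c := by
    apply Nat.card_congr
    apply Equiv.subtypeEquivRight
    intro y
    simp [List.cons_sublist_cons, List.count_cons]
  have hT : Nat.card {y : List Bool // y.length = n ∧ (false :: xs).Sublist (true :: y) ∧
      (true :: y).count true = (false :: xs).count true + c} =
      if c = 0 then 0 else F (false :: xs) n (c - 1) := by
    rcases c with _ | c
    · rw [if_pos rfl, Nat.card_eq_zero]
      left
      refine ⟨fun z => ?_⟩
      obtain ⟨y, hy, hs, hc⟩ := z
      rw [List.cons_sublist_cons'] at hs
      rcases hs with hs | ⟨hab, _⟩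
      · have hle := hs.count_le true
        simp [List.count_cons] at hc hle
        omega
      · simp at hab
    · rw [if_neg (by omega)]
      apply Nat.card_congr
      apply Equiv.subtypeEquivRight
      intro y
      rw [List.cons_sublist_cons']
      simp [List.count_cons]
      intro _
      omega
  rw [hT, hF]
  omega

/-- The abstract count, depending only on `(n, length, weight, c)`. -/
def G : ℕ → ℕ → ℕ → ℕ → ℕ
  | n, 0, w, c => if w = 0 then n.choose c else 0
  | 0, _ + 1, _, _ => 0
  | n + 1, m + 1, w, c =>
      if w = 0 then G n m 0 c + (if c = 0 then 0 else G n (m + 1) 0 (c - 1))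
      else G n m (w - 1) c + G n (m + 1) w c

lemma G_zero (m w c : ℕ) : G 0 (m + 1) w c = 0 := by rfl

lemma G_nil (n w c : ℕ) : G n 0 w c = if w = 0 then n.choose c else 0 := by
  cases n <;> rfl

lemma G_succ (n m w c : ℕ) : G (n + 1) (m + 1) w c =
    if w = 0 then G n m 0 c + (if c = 0 then 0 else G n (m + 1) 0 (c - 1))
    else G n m (w - 1) c + G n (m + 1) w c := by rfl

/-- The key exchange identity. -/
lemma G_exchange : ∀ n m w c : ℕ, 1 ≤ w → w ≤ m →
    G n m (w - 1) c + G n (m + 1) w c =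
      G n m w c + (if c = 0 then 0 else G n (m + 1) w (c - 1)) := by
  intro n
  induction n with
  | zero =>
    intro m w c hw hm
    obtain ⟨m', rfl⟩ : ∃ m', m = m' + 1 := ⟨m - 1, by omega⟩
    simp [G_zero]
  | succ n ih =>
    intro m w c hw hm
    obtain ⟨m', rfl⟩ : ∃ m', m = m' + 1 := ⟨m - 1, by omega⟩
    rcases Nat.lt_or_ge w 2 with hw2 | hw2
    · -- w = 1
      have hw1 : w = 1 := by omega
      subst hw1
      have key := ih (m' + 1) 1 c (le_refl 1) (by omega)
      rcases Nat.eq_zero_or_pos c with rfl | hc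
      · simp [G_succ] at key ⊢
        omega
      · obtain ⟨c', rfl⟩ : ∃ c', c = c' + 1 := ⟨c - 1, by omega⟩
        simp [G_succ] at key ⊢
        omega
    · -- w ≥ 2
      obtain ⟨w', rfl⟩ : ∃ w', w = w' + 2 := ⟨w - 2, by omega⟩
      have hne : w' + 2 ≠ 0 := by omega
      have hne1 : w' + 1 ≠ 0 := by omega
      have key1 := ih m' (w' + 1) c (by omega) (by omega)
      have key2 := ih (m' + 1) (w' + 2) c (by omega) (by omega)
      rcases Nat.eq_zero_or_pos c with rfl | hc
      · simp [G_succ] at key1 key2 ⊢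
        omega
      · obtain ⟨c', rfl⟩ : ∃ c', c = c' + 1 := ⟨c - 1, by omega⟩
        simp [G_succ] at key1 key2 ⊢
        omega

lemma F_eq_G : ∀ n (x : List Bool) (c : ℕ),
    F x n c = G n x.length (x.count true) c := by
  intro n
  induction n with
  | zero =>
    intro x c
    rcases x with _ | ⟨b, xs⟩
    · simp only [List.length_nil, List.count_nil]
      rw [F_nil, G_nil, if_pos rfl]
    · simp only [List.length_cons]
      rw [F_zero _ _ (Or.inl (by simp)), G_zero]
  | succ n ih =>
    intro x c
    rcases x with _ | ⟨b, xs⟩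
    · simp only [List.length_nil, List.count_nil]
      rw [F_nil, G_nil, if_pos rfl]
    · cases b
      · -- head false
        rw [F_cons_false, ih, ih]
        have hcount : (false :: xs).count true = xs.count true := by simp
        simp only [List.length_cons, hcount]
        rcases Nat.eq_zero_or_pos (xs.count true) with hw0 | hw0
        · rw [hw0, G_succ, if_pos rfl]
        · rw [G_succ, if_neg (show ¬(List.count true xs = 0) from by omega)]
          have := G_exchange n xs.length (xs.count true) c hw0
            List.count_le_length
          omega
      · -- head true
        rw [F_cons_true, ih, ih]
        have hcount : (true :: xs).count true = xs.count true + 1 := by simp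
        simp only [List.length_cons, hcount]
        rw [G_succ, if_neg (Nat.succ_ne_zero _), Nat.add_sub_cancel]

end ClusterCard

/-- Two strings of the same length and the same Hamming weight have, for every
`0 ≤ c ≤ n - m`, the same number of supersequences of length `n` with `c` extra ones. -/
theorem cluster_card_hamming_invariant (m n c : ℕ) (hmn : m ≤ n) (hc : c ≤ n - m)
    (x x' : List Bool) (hx : x.length = m) (hx' : x'.length = m)
    (hh : x.count true = x'.count true) :
    Nat.card {y : List Bool // y.length = n ∧ x.Sublist y ∧
        y.count true = x.count true + c} =
    Nat.card {y : List Bool // y.length = n ∧ x'.Sublist y ∧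
        y.count true = x'.count true + c} := by
  have h1 := ClusterCard.F_eq_G n x c
  have h2 := ClusterCard.F_eq_G n x' c
  rw [ClusterCard.F] at h1 h2
  rw [h1, h2, hx, hx', hh]
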